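/- Let d ≥ 1, u, v ∈ ℝ^d and W ∈ ℝ^{d×d} with ⟨u, v⟩ = 1. Define formal power series over ℝ by r = Σ_{k=0}^{∞} (uᵀ W^k v) X^k and s = 1 - Σ_{ℓ=1}^{∞} (uᵀ W (W - v uᵀ W)^{ℓ-1} v) X^ℓ. Then r · s = 1 in the ring of formal power series ℝ[[X]]; that is, s is the multiplicative inverse of r, so the reciprocal generating function 1/r(x) has coefficient sequence s_0 = 1 and s_ℓ = -uᵀ W (W - v uᵀ W)^{ℓ-1} v for ℓ ≥ 1. -/

import Mathlib

open Matrix Finset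

lemma vecMulVec_mulVec' {d : ℕ} (v u x : Fin d → ℝ) :
    (Matrix.vecMulVec v u).mulVec x = (dotProduct u x) • v := by
  funext i
  simp only [Matrix.mulVec, dotProduct, Matrix.vecMulVec_apply, Pi.smul_apply,
    smul_eq_mul]
  rw [Finset.sum_mul]
  exact Finset.sum_congr rfl fun j _ => by ring

lemma dot_sum' {d : ℕ} (u : Fin d → ℝ) {ι : Type*} (t : Finset ι) (f : ι → Fin d → ℝ) :
    dotProduct u (∑ i ∈ t, f i) = ∑ i ∈ t, dotProduct u (f i) := by
  simp only [dotProduct, Finset.sum_apply, Finset.mul_sum]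
  exact Finset.sum_comm

lemma key_vec {d : ℕ} (u v : Fin d → ℝ) (W : Matrix (Fin d) (Fin d) ℝ)
    (huv : dotProduct u v = 1) (n : ℕ) :
    (W ^ (n+1)).mulVec v = ∑ ℓ ∈ Finset.range (n+1),
      (dotProduct u ((W ^ (n-ℓ)).mulVec v)) •
        ((W * (W - Matrix.vecMulVec v u * W) ^ ℓ).mulVec v) := by
  set M := W - Matrix.vecMulVec v u * W with hM
  induction n with
  | zero =>
    simp [huv, Matrix.one_mulVec]
  | succ n ih =>
    have hterm : ∀ ℓ : ℕ, W.mulVec ((W * M ^ ℓ).mulVec v) =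
        (W * M ^ (ℓ+1)).mulVec v +
          (dotProduct u ((W * M ^ ℓ).mulVec v)) • W.mulVec v := by
      intro ℓ
      have h1 : W * M ^ (ℓ+1) = W * (W * M ^ ℓ) - W * (Matrix.vecMulVec v u * (W * M ^ ℓ)) := by
        rw [pow_succ', hM]
        noncomm_ring
      rw [h1, Matrix.sub_mulVec]
      simp only [← Matrix.mulVec_mulVec, vecMulVec_mulVec', Matrix.mulVec_smul]
      abel
    have hpow : (W ^ (n+2)).mulVec v = W.mulVec ((W ^ (n+1)).mulVec v) := by
      rw [Matrix.mulVec_mulVec, ← pow_succ']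
    rw [hpow, ih]
    have hlin : W.mulVec (∑ ℓ ∈ Finset.range (n+1),
        (dotProduct u ((W ^ (n-ℓ)).mulVec v)) • ((W * M ^ ℓ).mulVec v)) =
        ∑ ℓ ∈ Finset.range (n+1), (dotProduct u ((W ^ (n-ℓ)).mulVec v)) •
          W.mulVec ((W * M ^ ℓ).mulVec v) := by
      rw [← Matrix.mulVecLin_apply, map_sum]
      simp [Matrix.mulVecLin_apply]
    rw [hlin]
    have hscalar : dotProduct u ((W ^ (n+1)).mulVec v) =
        ∑ ℓ ∈ Finset.range (n+1), (dotProduct u ((W ^ (n-ℓ)).mulVec v)) *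
          (dotProduct u ((W * M ^ ℓ).mulVec v)) := by
      rw [ih, dot_sum']
      simp [dotProduct_smul, smul_eq_mul]
    calc ∑ ℓ ∈ Finset.range (n+1), (dotProduct u ((W ^ (n-ℓ)).mulVec v)) •
          W.mulVec ((W * M ^ ℓ).mulVec v)
        = ∑ ℓ ∈ Finset.range (n+1), ((dotProduct u ((W ^ (n-ℓ)).mulVec v)) •
            ((W * M ^ (ℓ+1)).mulVec v) +
            ((dotProduct u ((W ^ (n-ℓ)).mulVec v)) *
              (dotProduct u ((W * M ^ ℓ).mulVec v))) • W.mulVec v) := by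
          refine Finset.sum_congr rfl fun ℓ _ => ?_
          rw [hterm ℓ, smul_add, smul_smul]
      _ = (∑ ℓ ∈ Finset.range (n+1), (dotProduct u ((W ^ (n-ℓ)).mulVec v)) •
            ((W * M ^ (ℓ+1)).mulVec v)) +
          (dotProduct u ((W ^ (n+1)).mulVec v)) • W.mulVec v := by
          rw [Finset.sum_add_distrib, ← Finset.sum_smul, ← hscalar]
      _ = ∑ ℓ ∈ Finset.range (n+2), (dotProduct u ((W ^ (n+1-ℓ)).mulVec v)) •
            ((W * M ^ ℓ).mulVec v) := by
          rw [Finset.sum_range_succ' (fun ℓ => (dotProduct u ((W ^ (n+1-ℓ)).mulVec v)) •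
            ((W * M ^ ℓ).mulVec v)) (n+1)]
          simp [pow_zero, Matrix.mul_one]

/-- Representation of the reciprocal of a rational generating function: if
`r = ∑ₖ (uᵀ Wᵏ v) Xᵏ` with `⟨u, v⟩ = 1`, then the formal power series `s` with
`s 0 = 1` and `s ℓ = -uᵀ W (W - v uᵀ W)^{ℓ-1} v` for `ℓ ≥ 1` satisfies `r * s = 1`
in `ℝ[[X]]`. -/
theorem reciprocal_power_series (d : ℕ) (hd : 1 ≤ d)
    (u v : Fin d → ℝ) (W : Matrix (Fin d) (Fin d) ℝ)
    (huv : dotProduct u v = 1) :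
    (PowerSeries.mk (fun k : ℕ => dotProduct u ((W ^ k).mulVec v)) :
        PowerSeries ℝ) *
      PowerSeries.mk (fun k : ℕ =>
        if k = 0 then (1 : ℝ)
        else -dotProduct u
          ((W * (W - Matrix.vecMulVec v u * W) ^ (k - 1)).mulVec v)) = 1 := by
  set M := W - Matrix.vecMulVec v u * W with hM
  set a : ℕ → ℝ := fun k => dotProduct u ((W ^ k).mulVec v) with ha
  set s : ℕ → ℝ := fun k => if k = 0 then (1 : ℝ)
    else -dotProduct u ((W * M ^ (k - 1)).mulVec v) with hs
  ext n
  rw [PowerSeries.coeff_mul]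
  cases n with
  | zero =>
    simp [ha, hs, huv, Matrix.one_mulVec]
  | succ n =>
    have hscalar : a (n+1) = ∑ ℓ ∈ Finset.range (n+1),
        a (n-ℓ) * (dotProduct u ((W * M ^ ℓ).mulVec v)) := by
      rw [ha]
      simp only
      rw [key_vec u v W huv n, dot_sum']
      simp [dotProduct_smul, smul_eq_mul]
      rfl
    rw [Finset.Nat.sum_antidiagonal_eq_sum_range_succ_mk]
    rw [Finset.sum_range_succ]
    have h1 : ∀ k ∈ Finset.range (n+1),
        (PowerSeries.coeff k) (PowerSeries.mk a) *
          (PowerSeries.coeff (n+1-k)) (PowerSeries.mk s) =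
        -(a k * dotProduct u ((W * M ^ (n-k)).mulVec v)) := by
      intro k hk
      rw [Finset.mem_range] at hk
      have hk' : n+1-k ≠ 0 := by omega
      have hk'' : n+1-k-1 = n-k := by omega
      simp only [PowerSeries.coeff_mk, hs, if_neg hk', hk'']
      ring
    rw [Finset.sum_congr rfl h1]
    have h2 : (PowerSeries.coeff (n+1)) (PowerSeries.mk a) *
        (PowerSeries.coeff (n+1-(n+1))) (PowerSeries.mk s) = a (n+1) := by
      simp [hs]
    rw [h2]
    have h3 : ∑ k ∈ Finset.range (n+1), -(a k * dotProduct u ((W * M ^ (n-k)).mulVec v))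
        = -(a (n+1)) := by
      rw [hscalar,
        ← Finset.sum_range_reflect
          (fun ℓ => a (n-ℓ) * (dotProduct u ((W * M ^ ℓ).mulVec v))) (n+1),
        ← Finset.sum_neg_distrib]
      refine Finset.sum_congr rfl fun k hk => ?_
      rw [Finset.mem_range] at hk
      have e1 : n + 1 - 1 - k = n - k := by omega
      have e2 : n - (n - k) = k := by omega
      simp only [e1, e2]
    rw [h3]
    simp [PowerSeries.coeff_one]
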